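/- Let n ≥ 1 be an integer and q > 1 a real number. For real t such that 1 − q^n t ≠ 0 and 1 − q^{n+i} t ≠ 0 and 1 − q^{n−i} t ≠ 0 for all 1 ≤ i ≤ n, define Z(t) = (1 − q^n t)^{−c_{n,0}} · Π_{i=1}^{n} ((1 − q^{n+i} t)(1 − q^{n−i} t))^{−c_{n,i}} (integer powers of nonzero reals). Then for every real t ≠ 0 such that Z is defined at both t and 1/(q^{2n} t), one has Z(1/(q^{2n} t)) = Z(t). -/

import Mathlib

/-- The coefficients `c_{n,i}` from the paper. -/
def cCoeff (n i : ℕ) : ℤ :=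
  if i = 0 then
    ∑ k ∈ Finset.Icc 1 (2 * n), if 2 * n = k * (k + 1) then 2 * (-1 : ℤ) ^ k else 0
  else
    ∑ k ∈ Finset.Icc 1 (2 * n),
      ((if 2 * n = k * (k + 2 * i + 1) then (-1 : ℤ) ^ k else 0) +
        (if 2 * n = k * (k + 2 * i - 1) then (-1 : ℤ) ^ (k - 1) else 0))

/-- Auxiliary sums. -/
def fAux (n i : ℕ) : ℤ :=
  ∑ k ∈ Finset.Icc 1 (2 * n), if 2 * n = k * (k + 2 * i + 1) then (-1 : ℤ) ^ k else 0

lemma cCoeff_zero (n : ℕ) : cCoeff n 0 = 2 * fAux n 0 := by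
  rw [cCoeff, if_pos rfl, fAux, Finset.mul_sum]
  refine Finset.sum_congr rfl fun k _ => ?_
  rw [mul_ite, mul_zero]
  norm_num

lemma cCoeff_succ (n i : ℕ) (hi : 1 ≤ i) : cCoeff n i = fAux n i - fAux n (i - 1) := by
  rw [cCoeff, if_neg (by omega), fAux, fAux, ← Finset.sum_sub_distrib]
  refine Finset.sum_congr rfl fun k hk => ?_
  have hk1 : 1 ≤ k := (Finset.mem_Icc.mp hk).1
  have e1 : k + 2 * i - 1 = k + 2 * (i - 1) + 1 := by omega
  have e2 : (-1 : ℤ) ^ (k - 1) = -(-1 : ℤ) ^ k := by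
    obtain ⟨m, rfl⟩ : ∃ m, k = m + 1 := ⟨k - 1, by omega⟩
    simp [pow_succ]
  rw [e1, e2]
  split_ifs <;> ring

lemma fAux_top (n : ℕ) : fAux n n = 0 := by
  refine Finset.sum_eq_zero fun k hk => ?_
  have hk1 : 1 ≤ k := (Finset.mem_Icc.mp hk).1
  rw [if_neg]
  intro h
  nlinarith

lemma cCoeff_sum (n : ℕ) : ∑ i ∈ Finset.Icc 1 n, cCoeff n i = -fAux n 0 := by
  have h : ∑ i ∈ Finset.Icc 1 n, cCoeff n i
      = ∑ i ∈ Finset.range n, (fAux n (i + 1) - fAux n i) := by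
    rw [← Finset.Ico_add_one_right_eq_Icc, Finset.sum_Ico_eq_sum_range]
    have hr : n + 1 - 1 = n := by omega
    rw [hr]
    refine Finset.sum_congr rfl fun i _ => ?_
    rw [cCoeff_succ n (1 + i) (by omega)]
    congr 1
    · congr 1; omega
    · congr 1; omega
  rw [h, Finset.sum_range_sub, fAux_top]
  ring

lemma zpow_sum_aux {ι : Type*} (a : ℝ) (ha : a ≠ 0) (s : Finset ι) (g : ι → ℤ) :
    a ^ (∑ i ∈ s, g i) = ∏ i ∈ s, a ^ g i := by
  classical
  induction s using Finset.cons_induction with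
  | empty => simp
  | cons j s hj ih => rw [Finset.sum_cons, Finset.prod_cons, zpow_add₀ ha, ih]

/-- The functional equation `Z(1/(q^{2n} t)) = Z(t)` for
`Z(t) = (1-q^n t)^{-c_{n,0}} ∏_{i=1}^n ((1-q^{n+i}t)(1-q^{n-i}t))^{-c_{n,i}}`. -/
theorem zeta_functional_equation (n : ℕ) (hn : 1 ≤ n) (q : ℝ) (hq : 1 < q)
    (Z : ℝ → ℝ)
    (hZ : ∀ t : ℝ, Z t =
      (1 - q ^ n * t) ^ (-(cCoeff n 0)) *
        ∏ i ∈ Finset.Icc 1 n,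
          ((1 - q ^ (n + i) * t) * (1 - q ^ (n - i) * t)) ^ (-(cCoeff n i)))
    (t : ℝ) (ht : t ≠ 0)
    (h1 : 1 - q ^ n * t ≠ 0)
    (h2 : ∀ i ∈ Finset.Icc 1 n, 1 - q ^ (n + i) * t ≠ 0 ∧ 1 - q ^ (n - i) * t ≠ 0)
    (h1' : 1 - q ^ n * (1 / (q ^ (2 * n) * t)) ≠ 0)
    (h2' : ∀ i ∈ Finset.Icc 1 n,
      1 - q ^ (n + i) * (1 / (q ^ (2 * n) * t)) ≠ 0 ∧
        1 - q ^ (n - i) * (1 / (q ^ (2 * n) * t)) ≠ 0) :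
    Z (1 / (q ^ (2 * n) * t)) = Z t := by
  have hq0 : (0 : ℝ) < q := lt_trans one_pos hq
  have hqn : (q : ℝ) ^ n ≠ 0 := pow_ne_zero n (ne_of_gt hq0)
  set u : ℝ := q ^ n * t with hu_def
  have hu : u ≠ 0 := mul_ne_zero hqn ht
  have h2n : (q : ℝ) ^ (2 * n) = q ^ n * q ^ n := by rw [two_mul, pow_add]
  set s : ℝ := 1 / (q ^ (2 * n) * t) with hs_def
  -- the i = 0 factor
  have E0 : 1 - q ^ n * s = (1 - q ^ n * t) * (-(u⁻¹)) := by
    rw [hs_def, h2n, hu_def]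
    field_simp
    ring
  -- the i ≥ 1 factors
  have Ei : ∀ i ∈ Finset.Icc 1 n,
      ((1 - q ^ (n + i) * s) * (1 - q ^ (n - i) * s)) ^ (-(cCoeff n i))
        = ((1 - q ^ (n + i) * t) * (1 - q ^ (n - i) * t)) ^ (-(cCoeff n i))
            * ((u * u)⁻¹) ^ (-(cCoeff n i)) := by
    intro i hi
    have hiIcc := Finset.mem_Icc.mp hi
    have hpow : (q : ℝ) ^ (n + i) * q ^ (n - i) = q ^ n * q ^ n := by
      rw [← pow_add, ← pow_add]; congr 1; omega
    have key : (1 - q ^ (n + i) * s) * (1 - q ^ (n - i) * s)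
        = ((1 - q ^ (n + i) * t) * (1 - q ^ (n - i) * t)) * (u * u)⁻¹ := by
      have hqni : (q : ℝ) ^ (n + i) ≠ 0 := pow_ne_zero _ (ne_of_gt hq0)
      have hqni' : (q : ℝ) ^ (n - i) ≠ 0 := pow_ne_zero _ (ne_of_gt hq0)
      rw [hs_def, h2n, hu_def]
      field_simp
      linear_combination (q ^ n * q ^ n * t ^ 2 * (1 - q ^ n * q ^ n * t ^ 2) + (1 - q ^ n * q ^ n * t ^ 2) ^ 2) * hpow
    rw [key, mul_zpow]
  have huu : (u * u)⁻¹ ≠ 0 := inv_ne_zero (mul_ne_zero hu hu)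
  rw [hZ s, hZ t, E0, Finset.prod_congr rfl Ei, Finset.prod_mul_distrib,
    ← zpow_sum_aux _ huu, mul_zpow]
  have hsum : ∑ i ∈ Finset.Icc 1 n, -(cCoeff n i) = fAux n 0 := by
    rw [Finset.sum_neg_distrib, cCoeff_sum]; ring
  have hc0 : -(cCoeff n 0) = -fAux n 0 + -fAux n 0 := by
    rw [cCoeff_zero]; ring
  have hneg : (-(u⁻¹)) ^ (-(cCoeff n 0)) = ((u * u)⁻¹) ^ (-fAux n 0) := by
    rw [hc0, zpow_add₀ (by simpa using hu : -(u⁻¹) ≠ 0), ← mul_zpow]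
    congr 1
    field_simp
  rw [hsum, hneg]
  have : ((u * u)⁻¹) ^ (-fAux n 0) * ((u * u)⁻¹) ^ (fAux n 0) = 1 := by
    rw [← zpow_add₀ huu]; simp
  calc (1 - q ^ n * t) ^ (-cCoeff n 0) * ((u * u)⁻¹) ^ (-fAux n 0) *
        ((∏ i ∈ Finset.Icc 1 n, ((1 - q ^ (n + i) * t) * (1 - q ^ (n - i) * t)) ^ (-cCoeff n i)) *
          ((u * u)⁻¹) ^ (fAux n 0))
      = ((1 - q ^ n * t) ^ (-cCoeff n 0) *
          ∏ i ∈ Finset.Icc 1 n, ((1 - q ^ (n + i) * t) * (1 - q ^ (n - i) * t)) ^ (-cCoeff n i)) *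
        (((u * u)⁻¹) ^ (-fAux n 0) * ((u * u)⁻¹) ^ (fAux n 0)) := by ring
    _ = _ := by rw [this, mul_one]
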